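/- Let Ω̂ ⊆ ℝⁿ be an open set and let A : ℝⁿ → ℝⁿ be injective on Ω̂ and differentiable at every ξ ∈ Ω̂ with invertible derivative A'(ξ), and suppose there are constants 0 < c ≤ C, M₁ > 0, M₂ > 0 such that for all ξ ∈ Ω̂: c ≤ |det A'(ξ)| ≤ C, ‖A'(ξ)‖ ≤ M₁ (operator norm), and ‖(A'(ξ))⁻¹‖ ≤ M₂. Then for every u : ℝⁿ → ℝ differentiable on A(Ω̂), with û := u ∘ A, (c / M₁²) · ∫_{Ω̂} ‖∇û(ξ)‖² dξ ≤ ∫_{A(Ω̂)} ‖∇u(x)‖² dx ≤ C · M₂² · ∫_{Ω̂} ‖∇û(ξ)‖² dξ; i.e., the H¹ seminorms on the evolving domain and the reference domain are equivalent with constants depending only on the stated bounds. -/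

import Mathlib

open MeasureTheory

private lemma aux_lower {a b c d M : ℝ} (hM : 0 < M) (hab : a ≤ b * M) (hcd : c ≤ d)
    (ha : 0 ≤ a) (hb : 0 ≤ b) (hc : 0 ≤ c) : (c / M ^ 2) * a ^ 2 ≤ d * b ^ 2 := by
  have h2 : a ^ 2 ≤ (b * M) ^ 2 := pow_le_pow_left₀ ha hab 2
  calc (c / M ^ 2) * a ^ 2 ≤ (c / M ^ 2) * ((b * M) ^ 2) :=
        mul_le_mul_of_nonneg_left h2 (by positivity)
    _ = c * b ^ 2 := by field_simp
    _ ≤ d * b ^ 2 := mul_le_mul_of_nonneg_right hcd (by positivity)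

private lemma aux_upper {a b d C M : ℝ} (hba : b ≤ a * M) (hdC : d ≤ C)
    (hd : 0 ≤ d) (ha : 0 ≤ a) (hb : 0 ≤ b) : d * b ^ 2 ≤ C * M ^ 2 * a ^ 2 := by
  have h2 : b ^ 2 ≤ (a * M) ^ 2 := pow_le_pow_left₀ hb hba 2
  calc d * b ^ 2 ≤ C * ((a * M) ^ 2) :=
        mul_le_mul hdC h2 (by positivity) (le_trans hd hdC)
    _ = C * M ^ 2 * a ^ 2 := by ring

/-- Equivalence of the H¹ seminorms between the evolving domain `A '' Ω̂` and the reference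
domain `Ω̂`, with constants depending only on the bounds `c ≤ |det A'| ≤ C`,
`‖A'‖ ≤ M₁` and `‖(A')⁻¹‖ ≤ M₂`. -/
theorem h1_seminorm_equivalence_reference_evolving {n : ℕ}
    (Ωhat : Set (EuclideanSpace ℝ (Fin n))) (hΩ : IsOpen Ωhat)
    (A : EuclideanSpace ℝ (Fin n) → EuclideanSpace ℝ (Fin n))
    (A' : EuclideanSpace ℝ (Fin n) →
      (EuclideanSpace ℝ (Fin n) ≃L[ℝ] EuclideanSpace ℝ (Fin n)))
    (hA : ∀ ξ ∈ Ωhat,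
      HasFDerivAt A (A' ξ : EuclideanSpace ℝ (Fin n) →L[ℝ] EuclideanSpace ℝ (Fin n)) ξ)
    (hinj : Set.InjOn A Ωhat)
    (c C M₁ M₂ : ℝ) (hc : 0 < c) (hcC : c ≤ C) (hM₁ : 0 < M₁) (hM₂ : 0 < M₂)
    (hdet : ∀ ξ ∈ Ωhat,
      c ≤ |((A' ξ : EuclideanSpace ℝ (Fin n) →L[ℝ] EuclideanSpace ℝ (Fin n))).det| ∧
        |((A' ξ : EuclideanSpace ℝ (Fin n) →L[ℝ] EuclideanSpace ℝ (Fin n))).det| ≤ C)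
    (hop : ∀ ξ ∈ Ωhat,
      ‖(A' ξ : EuclideanSpace ℝ (Fin n) →L[ℝ] EuclideanSpace ℝ (Fin n))‖ ≤ M₁)
    (hopinv : ∀ ξ ∈ Ωhat,
      ‖((A' ξ).symm : EuclideanSpace ℝ (Fin n) →L[ℝ] EuclideanSpace ℝ (Fin n))‖ ≤ M₂)
    (u : EuclideanSpace ℝ (Fin n) → ℝ)
    (hu : ∀ x ∈ A '' Ωhat, DifferentiableAt ℝ u x) :
    (c / M₁ ^ 2) * ∫ ξ in Ωhat, ‖gradient (u ∘ A) ξ‖ ^ 2 ≤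
        ∫ x in A '' Ωhat, ‖gradient u x‖ ^ 2 ∧
      ∫ x in A '' Ωhat, ‖gradient u x‖ ^ 2 ≤
        C * M₂ ^ 2 * ∫ ξ in Ωhat, ‖gradient (u ∘ A) ξ‖ ^ 2 := by
  have hms : MeasurableSet Ωhat := hΩ.measurableSet
  set f : EuclideanSpace ℝ (Fin n) → ℝ := fun ξ => ‖gradient (u ∘ A) ξ‖ ^ 2 with hf_def
  set g : EuclideanSpace ℝ (Fin n) → ℝ := fun ξ =>
    |((A' ξ : EuclideanSpace ℝ (Fin n) →L[ℝ] EuclideanSpace ℝ (Fin n))).det| *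
      ‖gradient u (A ξ)‖ ^ 2 with hg_def
  have hgradnorm : ∀ (w : EuclideanSpace ℝ (Fin n) → ℝ) x, ‖gradient w x‖ = ‖fderiv ℝ w x‖ := by
    intro w x
    simp [gradient, LinearIsometryEquiv.norm_map]
  -- change of variables
  have hA' : ∀ ξ ∈ Ωhat, HasFDerivWithinAt A
      (A' ξ : EuclideanSpace ℝ (Fin n) →L[ℝ] EuclideanSpace ℝ (Fin n)) Ωhat ξ :=
    fun ξ hξ => (hA ξ hξ).hasFDerivWithinAt
  have hcov : ∫ x in A '' Ωhat, ‖gradient u x‖ ^ 2 = ∫ ξ in Ωhat, g ξ := by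
    have := integral_image_eq_integral_abs_det_fderiv_smul volume hms hA' hinj
      (fun x => ‖gradient u x‖ ^ 2)
    simpa [hg_def, smul_eq_mul] using this
  -- pointwise comparisons
  have hkey : ∀ ξ ∈ Ωhat, (c / M₁ ^ 2) * f ξ ≤ g ξ ∧ g ξ ≤ C * M₂ ^ 2 * f ξ := by
    intro ξ hξ
    have hy : A ξ ∈ A '' Ωhat := ⟨ξ, hξ, rfl⟩
    have hdu : DifferentiableAt ℝ u (A ξ) := hu _ hy
    have hcomp : fderiv ℝ (u ∘ A) ξ =
        (fderiv ℝ u (A ξ)).comp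
          (A' ξ : EuclideanSpace ℝ (Fin n) →L[ℝ] EuclideanSpace ℝ (Fin n)) :=
      (hdu.hasFDerivAt.comp ξ (hA ξ hξ)).fderiv
    have h1 : ‖fderiv ℝ (u ∘ A) ξ‖ ≤ ‖fderiv ℝ u (A ξ)‖ * M₁ := by
      rw [hcomp]
      exact le_trans (ContinuousLinearMap.opNorm_comp_le _ _)
        (mul_le_mul_of_nonneg_left (hop ξ hξ) (norm_nonneg _))
    have hback : fderiv ℝ u (A ξ) =
        (fderiv ℝ (u ∘ A) ξ).comp
          ((A' ξ).symm : EuclideanSpace ℝ (Fin n) →L[ℝ] EuclideanSpace ℝ (Fin n)) := by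
      rw [hcomp]
      ext x
      simp
    have h2 : ‖fderiv ℝ u (A ξ)‖ ≤ ‖fderiv ℝ (u ∘ A) ξ‖ * M₂ := by
      rw [hback]
      exact le_trans (ContinuousLinearMap.opNorm_comp_le _ _)
        (mul_le_mul_of_nonneg_left (hopinv ξ hξ) (norm_nonneg _))
    simp only [hf_def, hg_def, hgradnorm]
    exact ⟨aux_lower hM₁ h1 (hdet ξ hξ).1 (norm_nonneg _) (norm_nonneg _) hc.le,
      aux_upper h2 (hdet ξ hξ).2 (abs_nonneg _) (norm_nonneg _) (norm_nonneg _)⟩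
  -- measurability of f
  have hgm : Measurable fun x => ‖gradient u x‖ ^ 2 := by
    have : (fun x => ‖gradient u x‖ ^ 2) = fun x => ‖fderiv ℝ u x‖ ^ 2 :=
      funext fun x => by rw [hgradnorm]
    rw [this]
    exact ((measurable_fderiv ℝ u).norm).pow_const 2
  have hfmeas : Measurable f := by
    have : f = fun ξ => ‖fderiv ℝ (u ∘ A) ξ‖ ^ 2 :=
      funext fun ξ => by simp only [hf_def]; rw [hgradnorm]
    rw [this]
    exact ((measurable_fderiv ℝ (u ∘ A)).norm).pow_const 2
  -- a.e. strong measurability of g on Ωhat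
  have hg_ae : AEStronglyMeasurable g (volume.restrict Ωhat) := by
    have hAcont : ContinuousOn A Ωhat := fun ξ hξ =>
      ((hA ξ hξ).differentiableAt.continuousAt).continuousWithinAt
    have hAmeas : AEMeasurable A (volume.restrict Ωhat) := hAcont.aemeasurable hms
    have hdet_m : AEMeasurable (fun ξ => |(fderiv ℝ A ξ).det|) (volume.restrict Ωhat) :=
      ((continuous_abs.comp ContinuousLinearMap.continuous_det).measurable.comp
        (measurable_fderiv ℝ A)).aemeasurable
    have hgrad_m : AEMeasurable (fun ξ => ‖gradient u (A ξ)‖ ^ 2) (volume.restrict Ωhat) :=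
      hgm.comp_aemeasurable hAmeas
    have heq : (fun ξ => |(fderiv ℝ A ξ).det| * ‖gradient u (A ξ)‖ ^ 2)
        =ᵐ[volume.restrict Ωhat] g := by
      filter_upwards [ae_restrict_mem hms] with ξ hξ
      simp only [hg_def]
      rw [(hA ξ hξ).fderiv]
    exact (hdet_m.mul hgrad_m).aestronglyMeasurable.congr heq
  have hfnn : ∀ ξ, 0 ≤ f ξ := fun ξ => by positivity
  have hgnn : ∀ ξ ∈ Ωhat, 0 ≤ g ξ := fun ξ hξ => by
    simp only [hg_def]; positivity
  rw [hcov]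
  by_cases hint : IntegrableOn g Ωhat
  · have hfint : IntegrableOn f Ωhat := by
      refine Integrable.mono' (hint.const_mul (M₁ ^ 2 / c)) hfmeas.aestronglyMeasurable ?_
      filter_upwards [ae_restrict_mem hms] with ξ hξ
      have h := (hkey ξ hξ).1
      rw [Real.norm_of_nonneg (hfnn ξ)]
      calc f ξ = (M₁ ^ 2 / c) * ((c / M₁ ^ 2) * f ξ) := by field_simp
        _ ≤ (M₁ ^ 2 / c) * g ξ := mul_le_mul_of_nonneg_left h (by positivity)
    constructor
    · calc (c / M₁ ^ 2) * ∫ ξ in Ωhat, f ξ = ∫ ξ in Ωhat, (c / M₁ ^ 2) * f ξ :=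
            (integral_const_mul _ _).symm
        _ ≤ ∫ ξ in Ωhat, g ξ :=
            setIntegral_mono_on (hfint.const_mul _) hint hms fun ξ hξ => (hkey ξ hξ).1
    · calc ∫ ξ in Ωhat, g ξ ≤ ∫ ξ in Ωhat, C * M₂ ^ 2 * f ξ :=
            setIntegral_mono_on hint (hfint.const_mul _) hms fun ξ hξ => (hkey ξ hξ).2
        _ = C * M₂ ^ 2 * ∫ ξ in Ωhat, f ξ := integral_const_mul _ _
  · have hfint : ¬ IntegrableOn f Ωhat := by
      intro hfint
      apply hint
      refine Integrable.mono' (hfint.const_mul (C * M₂ ^ 2)) hg_ae ?_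
      filter_upwards [ae_restrict_mem hms] with ξ hξ
      rw [Real.norm_of_nonneg (hgnn ξ hξ)]
      exact (hkey ξ hξ).2
    rw [integral_undef hint, integral_undef hfint]
    simp
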